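/- There exist M > 0, the open interval Ω := (0,M) ⊂ ℝ, and a measurable set E ⊆ Ω such that P^γ_s(E;Ω) = +∞ for every s ∈ (0,1). Explicitly, one may take a decreasing sequence β_k > 0 with M := Σ_{k≥1} β_k < ∞ and Σ_{k≥1} β_k^{1-s} = +∞ for all s ∈ (0,1), set σ_m := Σ_{k=1}^m β_k, I_m := (σ_m, σ_{m+1}), and E := ∪_{j≥1} I_{2j}. -/

import Mathlib

open MeasureTheory Real Set Filter

/-- The standard Gaussian measure on ℝ. -/
noncomputable def gauss1 : Measure ℝ :=
  volume.withDensity fun x => ENNReal.ofReal ((2 * π) ^ (-(1 : ℝ) / 2) * Real.exp (-x ^ 2 / 2))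

/-- The one-dimensional Mehler kernel. -/
noncomputable def mehler1 (t x y : ℝ) : ℝ :=
  (1 - Real.exp (-2 * t)) ^ (-(1 : ℝ) / 2) *
    Real.exp (-(Real.exp (-2 * t) * x ^ 2 - 2 * Real.exp (-t) * x * y +
      Real.exp (-2 * t) * y ^ 2) / (2 * (1 - Real.exp (-2 * t))))

/-- The kernel $K_σ(x,y) = ∫_0^∞ M_t(x,y) t^{-σ/2-1} dt$. -/
noncomputable def Kker1 (σ : ℝ) (x y : ℝ) : ENNReal :=
  ∫⁻ t in Ioi (0 : ℝ), ENNReal.ofReal (mehler1 t x y * t ^ (-σ / 2 - 1))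

/-- The interaction $L^γ_s(A,B)$. -/
noncomputable def Lgamma1 (s : ℝ) (A B : Set ℝ) : ENNReal :=
  ∫⁻ x in A, ∫⁻ y in B, Kker1 s x y ∂gauss1 ∂gauss1

/-- The fractional Gaussian $s$-perimeter in dimension one. -/
noncomputable def Pgamma1 (s : ℝ) (E Ω : Set ℝ) : ENNReal :=
  Lgamma1 s (E ∩ Ω) (Eᶜ ∩ Ω) + Lgamma1 s (E ∩ Ω) (Eᶜ ∩ Ωᶜ) + Lgamma1 s (E ∩ Ωᶜ) (Eᶜ ∩ Ω)

/-- there are $M>0$, $Ω = (0,M)$ and a measurable $E ⊆ Ω$ with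
$P^γ_s(E;Ω)=+∞$ for every $s∈(0,1)$; explicitly, $E$ may be taken as the union of the
even-indexed intervals determined by a positive decreasing summable sequence $(β_k)$
with $Σ_k β_k^{1-s}=+∞$ for all $s∈(0,1)$. -/
noncomputable def bet (k : ℕ) : ℝ := 1 / (100 * ((k : ℝ) + 2) * (Real.log ((k : ℝ) + 2)) ^ 2)

lemma log_ge (k : ℕ) : (0.69 : ℝ) ≤ Real.log ((k : ℝ) + 2) := by
  have h2 : (0.69 : ℝ) ≤ Real.log 2 := by linarith [Real.log_two_gt_d9]
  have : (2 : ℝ) ≤ (k : ℝ) + 2 := by linarith [Nat.cast_nonneg (α := ℝ) k]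
  exact h2.trans (Real.log_le_log (by norm_num) this)

lemma bet_pos (k : ℕ) : 0 < bet k := by
  have := log_ge k
  unfold bet; positivity

lemma bet_anti : ∀ j k : ℕ, j ≤ k → bet k ≤ bet j := by
  intro j k h
  unfold bet
  have hj := log_ge j
  have hk := log_ge k
  have hjk : (j : ℝ) ≤ (k : ℝ) := Nat.cast_le.2 h
  have hlog : Real.log ((j:ℝ)+2) ≤ Real.log ((k:ℝ)+2) :=
    Real.log_le_log (by positivity) (by linarith)
  apply one_div_le_one_div_of_le
  · nlinarith
  · have h1 : log ((j:ℝ)+2) ^ 2 ≤ log ((k:ℝ)+2) ^ 2 := by nlinarith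
    nlinarith

lemma bet_le (k : ℕ) : bet k ≤ 1/4 := by
  have h := log_ge k
  have h2 : (0 : ℝ) ≤ (k : ℝ) := Nat.cast_nonneg k
  unfold bet
  rw [div_le_div_iff₀ (by nlinarith) (by norm_num)]
  nlinarith

lemma bet_summable : Summable bet := by
  refine (summable_condensed_iff_of_nonneg (fun n => (bet_pos n).le)
    (fun m n _ h => bet_anti m n h)).1 ?_
  rw [← summable_nat_add_iff 1]
  have hsum : Summable (fun k : ℕ => (1:ℝ)/36 * (1 / ((k:ℝ)+1)^2)) := by
    apply Summable.mul_left
    have := (summable_nat_add_iff (f := fun n : ℕ => 1 / ((n:ℝ))^2) 1).2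
      (summable_one_div_nat_pow.2 one_lt_two)
    refine this.congr fun n => ?_
    push_cast; ring
  refine Summable.of_nonneg_of_le (fun k => ?_) (fun k => ?_) hsum
  · exact mul_nonneg (by positivity) (bet_pos _).le
  · have hb := bet_pos (2 ^ (k+1))
    have hlog : ((k:ℝ)+1) * 0.69 ≤ Real.log ((2^(k+1) : ℕ) + 2) := by
      have h1 : ((2:ℝ) ^ (k+1)) ≤ ((2^(k+1) : ℕ) : ℝ) + 2 := by
        push_cast; linarith
      have h2 : Real.log ((2:ℝ)^(k+1)) ≤ Real.log (((2^(k+1):ℕ):ℝ) + 2) :=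
        Real.log_le_log (by positivity) h1
      rw [Real.log_pow] at h2
      have h3 : (0.69 : ℝ) ≤ Real.log 2 := by linarith [Real.log_two_gt_d9]
      calc ((k:ℝ)+1) * 0.69 ≤ ((k:ℝ)+1) * Real.log 2 := by
            apply mul_le_mul_of_nonneg_left h3; positivity
        _ = ((k+1 : ℕ) : ℝ) * Real.log 2 := by push_cast; ring
        _ ≤ _ := h2
    unfold bet
    have hk1 : (0:ℝ) < (k:ℝ)+1 := by positivity
    have hcast : ((2^(k+1) : ℕ) : ℝ) = (2:ℝ)^(k+1) := by push_cast; ring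
    rw [hcast]
    rw [hcast] at hlog
    have hlogpos : (0:ℝ) < Real.log ((2:ℝ)^(k+1) + 2) := by nlinarith [hlog, hk1]
    have hE : (0:ℝ) < (2:ℝ)^(k+1) := by positivity
    have goal2 : (2:ℝ)^(k+1) / (100 * ((2:ℝ)^(k+1)+2) * (Real.log ((2:ℝ)^(k+1)+2))^2)
        ≤ 1 / (36*((k:ℝ)+1)^2) := by
      rw [div_le_div_iff₀ (by positivity) (by positivity)]
      have key : (0.4761:ℝ)*((k:ℝ)+1)^2 ≤ (Real.log ((2:ℝ)^(k+1)+2))^2 := by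
        nlinarith [hlog, hk1, hlogpos]
      nlinarith [mul_le_mul_of_nonneg_left key hE.le, hE, sq_nonneg (Real.log ((2:ℝ)^(k+1)+2)), mul_pos hk1 hk1]
    calc (2:ℝ)^(k+1) * (1 / (100 * ((2:ℝ)^(k+1)+2) * (Real.log ((2:ℝ)^(k+1)+2))^2))
        = (2:ℝ)^(k+1) / (100 * ((2:ℝ)^(k+1)+2) * (Real.log ((2:ℝ)^(k+1)+2))^2) := by ring
      _ ≤ 1 / (36*((k:ℝ)+1)^2) := goal2
      _ = 1/36 * (1/((k:ℝ)+1)^2) := by field_simp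

lemma bet_harmonic {s : ℝ} (hs0 : 0 < s) (hs1 : s < 1) :
    ∀ᶠ k : ℕ in atTop, 1/((k:ℝ)+1) ≤ bet k ^ (1-s) := by
  set p := 1 - s with hpdef
  have hp0 : 0 < p := by simp only [hpdef]; linarith
  have hp1 : p < 1 := by simp only [hpdef]; linarith
  have hlo := isLittleO_log_rpow_rpow_atTop (s := 1-p) (2*p) (by linarith)
  have h100 : (0:ℝ) < (100:ℝ) ^ p := Real.rpow_pos_of_pos (by norm_num) p
  have hc : (0:ℝ) < 1/(2 * (100:ℝ) ^ p) := by positivity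
  have hev := hlo.def hc
  have hx : Tendsto (fun k : ℕ => ((k:ℝ)+2)) atTop atTop :=
    tendsto_atTop_add_const_right _ 2 tendsto_natCast_atTop_atTop
  filter_upwards [hx.eventually hev, hx.eventually (eventually_ge_atTop (1:ℝ))] with k hk hk1
  set x : ℝ := (k:ℝ)+2 with hxdef
  set L : ℝ := Real.log x with hLdef
  have hL : (0.69:ℝ) ≤ L := log_ge k
  have hL0 : 0 < L := by linarith
  have hx0 : (0:ℝ) < x := by linarith
  have hkk : L ^ (2*p) ≤ (1/(2 * (100:ℝ) ^ p)) * x ^ (1-p) := by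
    rwa [Real.norm_eq_abs, Real.norm_eq_abs, abs_of_nonneg (Real.rpow_nonneg hL0.le _),
      abs_of_nonneg (Real.rpow_nonneg hx0.le _)] at hk
  set D : ℝ := 100 * x * L ^ 2 with hDdef
  have hD0 : 0 < D := by positivity
  have hDp : D ^ p ≤ x/2 := by
    have e1 : D ^ p = (100:ℝ)^p * x^p * L^(2*p) := by
      rw [hDdef, Real.mul_rpow (by positivity) (by positivity),
        Real.mul_rpow (by norm_num) hx0.le]
      congr 1
      rw [← Real.rpow_natCast L 2, ← Real.rpow_mul hL0.le]
      norm_num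
    have e2 : x ^ p * x^(1-p) = x := by
      rw [← Real.rpow_add hx0]; norm_num
    calc D ^ p = (100:ℝ)^p * x^p * L^(2*p) := e1
      _ ≤ (100:ℝ)^p * x^p * ((1/(2 * (100:ℝ) ^ p)) * x ^ (1-p)) := by
          apply mul_le_mul_of_nonneg_left hkk; positivity
      _ = (x ^ p * x^(1-p)) * ((100:ℝ)^p * (1/(2 * (100:ℝ) ^ p))) := by ring
      _ = x/2 := by rw [e2]; field_simp
  have hDppos : 0 < D ^ p := Real.rpow_pos_of_pos hD0 p
  have hbk : bet k ^ p = 1 / D ^ p := by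
    rw [show bet k = 1/D from rfl, one_div, one_div, Real.inv_rpow hD0.le]
  rw [hbk]
  apply one_div_le_one_div_of_le hDppos
  have : x/2 ≤ (k:ℝ)+1 := by rw [hxdef]; linarith [Nat.cast_nonneg (α := ℝ) k]
  linarith

lemma not_summable_of_harmonic_le {f : ℕ → ℝ}
    (h : ∀ᶠ k : ℕ in atTop, 1/((k:ℝ)+1) ≤ f k) : ¬ Summable f := by
  intro hs
  obtain ⟨N, hN⟩ := h.exists_forall_of_atTop
  have h2 : Summable fun k => f (k+N) := (summable_nat_add_iff N).2 hs
  have h3 : Summable (fun k : ℕ => ((N:ℝ)+1) * f (k+N)) := h2.mul_left _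
  have h4 : Summable (fun k : ℕ => 1/((k:ℝ)+1)) := by
    refine Summable.of_nonneg_of_le (fun k => by positivity) (fun k => ?_) h3
    have hNk := hN (k+N) (Nat.le_add_left N k)
    have hk0 : (0:ℝ) ≤ (k:ℝ) := Nat.cast_nonneg k
    have hN0 : (0:ℝ) ≤ (N:ℝ) := Nat.cast_nonneg N
    have step : 1/((k:ℝ)+1) ≤ ((N:ℝ)+1) * (1/((k:ℝ)+(N:ℝ)+1)) := by
      rw [mul_one_div, div_le_div_iff₀ (by positivity) (by positivity)]
      nlinarith
    refine step.trans ?_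
    apply mul_le_mul_of_nonneg_left _ (by positivity)
    have : ((k+N:ℕ):ℝ) = (k:ℝ)+(N:ℝ) := by push_cast; ring
    rw [← this] at *
    linarith [hNk]
  have h5 : Summable (fun n : ℕ => 1/(n:ℝ)) := by
    rw [← summable_nat_add_iff 1]
    refine h4.congr fun n => ?_
    push_cast; ring
  exact Real.not_summable_one_div_natCast h5

lemma mehler_pointwise {s ρ x y t : ℝ} (hs0 : 0 < s) (hs1 : s < 1)
    (hx : 0 ≤ x) (hy : 0 ≤ y) (hxy : (x-y)^2 ≤ ρ^2) (hρ0 : 0 < ρ) (hρ : ρ ≤ 1/2)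
    (ht : t ∈ Ioo (ρ^2) (2*ρ^2)) :
    (4*ρ^2) ^ (-(1:ℝ)/2) * Real.exp (-(1:ℝ)/2) * (2*ρ^2) ^ (-s/2-1)
      ≤ mehler1 t x y * t ^ (-s/2-1) := by
  obtain ⟨ht1, ht2⟩ := ht
  have ht0 : 0 < t := lt_trans (by positivity) ht1
  have hthalf : t ≤ 1/2 := by nlinarith
  have he2 : Real.exp (-2*t) < 1 := by
    rw [Real.exp_lt_one_iff]; linarith
  have he2pos : 0 < Real.exp (-2*t) := Real.exp_pos _
  have h1 : 0 < 1 - Real.exp (-2*t) := by linarith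
  -- 1 - exp(-2t) ≤ 2t
  have h2 : 1 - Real.exp (-2*t) ≤ 2*t := by
    have := Real.add_one_le_exp (-2*t)
    linarith
  -- t ≤ 1 - exp(-2t)  (for t ≤ 1/2)
  have h3 : t ≤ 1 - Real.exp (-2*t) := by
    have hA : 1 + 2*t ≤ Real.exp (2*t) := by linarith [Real.add_one_le_exp (2*t)]
    have hB : Real.exp (-2*t) = 1 / Real.exp (2*t) := by
      rw [show (-2*t) = -(2*t) by ring, Real.exp_neg, one_div]
    have hC : Real.exp (-2*t) ≤ 1/(1+2*t) := by
      rw [hB]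
      apply one_div_le_one_div_of_le (by positivity) hA
    have hD : 1/(1+2*t) ≤ 1 - t := by
      rw [div_le_iff₀ (by positivity)]
      nlinarith
    linarith
  -- factor 1
  have f1 : (4*ρ^2) ^ (-(1:ℝ)/2) ≤ (1 - Real.exp (-2*t)) ^ (-(1:ℝ)/2) := by
    apply Real.rpow_le_rpow_of_nonpos h1 (by nlinarith) (by norm_num)
  -- factor 2 : the exponential
  have hN : Real.exp (-2*t) * x^2 - 2*Real.exp (-t)*x*y + Real.exp (-2*t)*y^2
      ≤ 1 - Real.exp (-2*t) := by
    have hee : Real.exp (-2*t) ≤ Real.exp (-t) := Real.exp_le_exp.2 (by linarith)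
    have hNsq : Real.exp (-2*t) * x^2 - 2*Real.exp (-t)*x*y + Real.exp (-2*t)*y^2
        ≤ (x-y)^2 := by nlinarith [mul_nonneg hx hy, sq_nonneg (x-y)]
    nlinarith
  have f2 : Real.exp (-(1:ℝ)/2) ≤
      Real.exp (-(Real.exp (-2*t) * x^2 - 2*Real.exp (-t)*x*y + Real.exp (-2*t)*y^2)
        / (2*(1 - Real.exp (-2*t)))) := by
    apply Real.exp_le_exp.2
    rw [le_div_iff₀ (by positivity)]
    linarith
  -- factor 3
  have f3 : (2*ρ^2) ^ (-s/2-1) ≤ t ^ (-s/2-1) := by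
    apply Real.rpow_le_rpow_of_nonpos ht0 ht2.le (by nlinarith)
  have m1 : 0 ≤ (4*ρ^2) ^ (-(1:ℝ)/2) := Real.rpow_nonneg (by positivity) _
  have m2 : 0 ≤ Real.exp (-(1:ℝ)/2) := (Real.exp_pos _).le
  have m3 : 0 ≤ (2*ρ^2) ^ (-s/2-1) := Real.rpow_nonneg (by positivity) _
  have mm1 : 0 ≤ (1 - Real.exp (-2*t)) ^ (-(1:ℝ)/2) := Real.rpow_nonneg h1.le _
  unfold mehler1
  calc (4*ρ^2) ^ (-(1:ℝ)/2) * Real.exp (-(1:ℝ)/2) * (2*ρ^2) ^ (-s/2-1)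
      ≤ (1 - Real.exp (-2*t)) ^ (-(1:ℝ)/2) *
        Real.exp (-(Real.exp (-2*t) * x^2 - 2*Real.exp (-t)*x*y + Real.exp (-2*t)*y^2)
          / (2*(1 - Real.exp (-2*t)))) * t ^ (-s/2-1) := by
        apply mul_le_mul (mul_le_mul f1 f2 m2 mm1) f3 m3
        positivity
    _ = _ := by norm_num

lemma Kker1_lb {s ρ x y : ℝ} (hs0 : 0 < s) (hs1 : s < 1)
    (hx : 0 ≤ x) (hy : 0 ≤ y) (hxy : (x-y)^2 ≤ ρ^2) (hρ0 : 0 < ρ) (hρ : ρ ≤ 1/2) :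
    ENNReal.ofReal (ρ ^ (-1-s) / 16) ≤ Kker1 s x y := by
  set C0 : ℝ := (4*ρ^2) ^ (-(1:ℝ)/2) * Real.exp (-(1:ℝ)/2) * (2*ρ^2) ^ (-s/2-1) with hC0
  have hC0nn : 0 ≤ C0 := by
    apply mul_nonneg (mul_nonneg (Real.rpow_nonneg (by positivity) _) (Real.exp_pos _).le)
      (Real.rpow_nonneg (by positivity) _)
  have hsub : Ioo (ρ^2) (2*ρ^2) ⊆ Ioi (0:ℝ) := fun t ht => lt_trans (by positivity) ht.1
  have step1 : ∫⁻ t in Ioo (ρ^2) (2*ρ^2), ENNReal.ofReal (mehler1 t x y * t ^ (-s/2-1))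
      ≤ Kker1 s x y :=
    lintegral_mono' (Measure.restrict_mono hsub le_rfl) le_rfl
  refine le_trans ?_ step1
  have step2 : ENNReal.ofReal C0 * volume (Ioo (ρ^2) (2*ρ^2))
      ≤ ∫⁻ t in Ioo (ρ^2) (2*ρ^2), ENNReal.ofReal (mehler1 t x y * t ^ (-s/2-1)) := by
    rw [← setLIntegral_const]
    refine setLIntegral_mono' measurableSet_Ioo fun t ht => ?_
    exact ENNReal.ofReal_le_ofReal (mehler_pointwise hs0 hs1 hx hy hxy hρ0 hρ ht)
  refine le_trans ?_ step2
  rw [Real.volume_Ioo, show 2*ρ^2 - ρ^2 = ρ^2 by ring, ← ENNReal.ofReal_mul hC0nn]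
  apply ENNReal.ofReal_le_ofReal
  -- real inequality: ρ^(-1-s)/16 ≤ C0 * ρ^2
  have hρne : ρ ≠ 0 := hρ0.ne'
  have a1 : (4*ρ^2) ^ (-(1:ℝ)/2) = (1/2) * ρ^(-1:ℝ) := by
    rw [show (4:ℝ)*ρ^2 = (2*ρ)^2 by ring, ← Real.rpow_natCast (2*ρ) 2,
      ← Real.rpow_mul (by positivity)]
    rw [show ((2:ℕ):ℝ) * (-(1:ℝ)/2) = -1 by norm_num, Real.rpow_neg_one,
      Real.rpow_neg_one, mul_inv]
    norm_num
  have a2 : ((2:ℝ)*ρ^2) ^ (-s/2-1) = 2^(-s/2-1) * ρ^(-s-2) := by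
    rw [Real.mul_rpow (by norm_num) (by positivity), ← Real.rpow_natCast ρ 2,
      ← Real.rpow_mul hρ0.le]
    congr 2; push_cast; ring
  have hE : (1/2:ℝ) ≤ Real.exp (-(1:ℝ)/2) := by
    have := Real.add_one_le_exp (-(1:ℝ)/2); linarith
  have hT : (1/4:ℝ) ≤ (2:ℝ)^(-s/2-1) := by
    have h1 : ((2:ℝ))^(-2:ℝ) ≤ (2:ℝ)^(-s/2-1) :=
      Real.rpow_le_rpow_of_exponent_le one_le_two (by linarith)
    have h2 : ((2:ℝ))^(-2:ℝ) = 1/4 := by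
      rw [show (-2:ℝ) = ((-2:ℤ):ℝ) by norm_num, Real.rpow_intCast]; norm_num
    linarith
  have hP : (0:ℝ) < ρ^(-1-s) := Real.rpow_pos_of_pos hρ0 _
  have hcomb : ρ^(-1:ℝ) * ρ^(-s-2:ℝ) * ρ^(2:ℕ) = ρ^(-1-s) := by
    rw [← Real.rpow_natCast ρ 2, ← Real.rpow_add hρ0, ← Real.rpow_add hρ0]
    congr 1; push_cast; ring
  have key : C0 * ρ^2 = Real.exp (-(1:ℝ)/2) * ((2:ℝ)^(-s/2-1) * ((1/2) * ρ^(-1-s))) := by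
    rw [hC0, a1, a2, ← hcomb]; ring
  rw [key]
  have hTP : (1/4:ℝ) * ((1/2) * ρ^(-1-s)) ≤ (2:ℝ)^(-s/2-1) * ((1/2) * ρ^(-1-s)) := by
    apply mul_le_mul_of_nonneg_right hT; positivity
  have hEP : (0:ℝ) ≤ (2:ℝ)^(-s/2-1) * ((1/2) * ρ^(-1-s)) := by positivity
  calc ρ^(-1-s)/16 = (1/2) * ((1/4) * ((1/2) * ρ^(-1-s))) := by ring
    _ ≤ (1/2) * ((2:ℝ)^(-s/2-1) * ((1/2) * ρ^(-1-s))) := by linarith [hTP]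
    _ ≤ Real.exp (-(1:ℝ)/2) * ((2:ℝ)^(-s/2-1) * ((1/2) * ρ^(-1-s))) :=
        mul_le_mul_of_nonneg_right hE hEP

lemma gauss1_Ioo_ge {a b Mv : ℝ} (ha : 0 ≤ a) (hb : b ≤ Mv) :
    ENNReal.ofReal ((2*π)^(-(1:ℝ)/2) * Real.exp (-Mv^2/2)) * ENNReal.ofReal (b - a)
      ≤ gauss1 (Ioo a b) := by
  rw [gauss1, withDensity_apply _ measurableSet_Ioo]
  calc ENNReal.ofReal ((2*π)^(-(1:ℝ)/2) * Real.exp (-Mv^2/2)) * ENNReal.ofReal (b - a)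
      = ENNReal.ofReal ((2*π)^(-(1:ℝ)/2) * Real.exp (-Mv^2/2)) * volume (Ioo a b) := by
        rw [Real.volume_Ioo]
    _ = ∫⁻ _ in Ioo a b, ENNReal.ofReal ((2*π)^(-(1:ℝ)/2) * Real.exp (-Mv^2/2)) := by
        rw [setLIntegral_const]
    _ ≤ _ := by
        refine setLIntegral_mono' measurableSet_Ioo fun x hx => ?_
        apply ENNReal.ofReal_le_ofReal
        apply mul_le_mul_of_nonneg_left _ (Real.rpow_nonneg (by positivity) _)
        apply Real.exp_le_exp.2
        have h1 : 0 ≤ x := le_of_lt (lt_of_le_of_lt ha hx.1)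
        have h2 : x ≤ Mv := le_trans hx.2.le hb
        nlinarith

theorem stmt_15 :
    ∃ (M : ℝ) (E : Set ℝ), 0 < M ∧ E ⊆ Set.Ioo 0 M ∧ MeasurableSet E ∧
      (∃ β : ℕ → ℝ, (∀ k, 0 < β k) ∧ (∀ j k, j ≤ k → β k ≤ β j) ∧ Summable β ∧
        M = ∑' k, β k ∧
        (∀ s ∈ Set.Ioo (0 : ℝ) 1, ¬ Summable fun k => β k ^ (1 - s)) ∧
        E = ⋃ j : ℕ, Set.Ioo (∑ k ∈ Finset.range (2 * j + 2), β k)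
          (∑ k ∈ Finset.range (2 * j + 3), β k)) ∧
      ∀ s ∈ Set.Ioo (0 : ℝ) 1, Pgamma1 s E (Set.Ioo 0 M) = ⊤ := by
  set M : ℝ := ∑' k, bet k with hMdef
  set S : ℕ → ℝ := fun m => ∑ k ∈ Finset.range m, bet k with hSdef
  have hS0 : ∀ m, 0 ≤ S m := fun m => Finset.sum_nonneg fun i _ => (bet_pos i).le
  have hSsucc : ∀ m, S (m+1) = S m + bet m := fun m => Finset.sum_range_succ _ _
  have hSmono : ∀ {m n : ℕ}, m ≤ n → S m ≤ S n := fun {m n} h =>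
    Finset.sum_le_sum_of_subset_of_nonneg (Finset.range_subset_range.2 h)
      (fun i _ _ => (bet_pos i).le)
  have hSlt : ∀ m, S m < M := by
    intro m
    have h1 : S (m+1) ≤ M := Summable.sum_le_tsum _ (fun i _ => (bet_pos i).le) bet_summable
    have h2 := hSsucc m
    have h3 := bet_pos m
    linarith
  have hM0 : 0 < M := lt_of_le_of_lt (hS0 0) (hSlt 0)
  set E : Set ℝ := ⋃ j : ℕ, Ioo (S (2*j+2)) (S (2*j+3)) with hEdef
  have hEsub : E ⊆ Set.Ioo 0 M := by
    intro x hx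
    simp only [hEdef, mem_iUnion] at hx
    obtain ⟨j, hj⟩ := hx
    exact ⟨lt_of_le_of_lt (hS0 (2*j+2)) hj.1, lt_trans hj.2 (hSlt (2*j+3))⟩
  refine ⟨M, E, hM0, hEsub, MeasurableSet.iUnion fun j => measurableSet_Ioo,
    ⟨bet, bet_pos, bet_anti, bet_summable, rfl,
      fun s hs => not_summable_of_harmonic_le (bet_harmonic hs.1 hs.2), rfl⟩, ?_⟩
  rintro s ⟨hs0, hs1⟩
  set Ω : Set ℝ := Set.Ioo 0 M with hΩdef
  -- the sets
  set A : ℕ → Set ℝ := fun j => Ioo (S (2*j+3) - bet (2*j+3)) (S (2*j+3)) with hAdef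
  set B : ℕ → Set ℝ := fun j => Ioo (S (2*j+3)) (S (2*j+4)) with hBdef
  set d : ℝ := (2*π)^(-(1:ℝ)/2) * Real.exp (-M^2/2) with hddef
  have hd0 : 0 < d := by
    apply mul_pos (Real.rpow_pos_of_pos (by positivity) _) (Real.exp_pos _)
  have hAsub : ∀ j, A j ⊆ E ∩ Ω := by
    intro j x hx
    have hb : bet (2*j+3) ≤ bet (2*j+2) := bet_anti _ _ (by omega)
    have h1 := hSsucc (2*j+2)
    have hx1 := hx.1; have hx2 := hx.2
    constructor
    · simp only [hEdef, mem_iUnion]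
      exact ⟨j, by constructor <;> [linarith; linarith]⟩
    · constructor
      · have := hS0 (2*j+2); have := bet_pos (2*j+2); linarith
      · exact lt_trans hx2 (hSlt _)
  have hBsub : ∀ j, B j ⊆ Eᶜ ∩ Ω := by
    intro j y hy
    have hy1 := hy.1; have hy2 := hy.2
    constructor
    · intro hyE
      simp only [hEdef, mem_iUnion] at hyE
      obtain ⟨i, hi⟩ := hyE
      rcases le_or_gt i j with h | h
      · have : S (2*i+3) ≤ S (2*j+3) := hSmono (by omega)
        linarith [hi.2]
      · have : S (2*j+4) ≤ S (2*i+2) := hSmono (by omega)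
        linarith [hi.1]
    · constructor
      · have := hS0 (2*j+3); linarith
      · exact lt_trans hy2 (hSlt _)
  have hdisjA : Pairwise (Function.onFun Disjoint A) := by
    intro i j hij
    rcases lt_or_gt_of_ne hij with h | h
    · apply Set.disjoint_left.2
      intro x hxi hxj
      have h1 : S (2*i+3) ≤ S (2*j+3) - bet (2*j+3) := by
        have e1 := hSsucc (2*j+2)
        have e2 : S (2*i+3) ≤ S (2*j+2) := hSmono (by omega)
        have e3 : bet (2*j+3) ≤ bet (2*j+2) := bet_anti _ _ (by omega)
        linarith
      linarith [hxi.2, hxj.1]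
    · apply Set.disjoint_left.2
      intro x hxi hxj
      have h1 : S (2*j+3) ≤ S (2*i+3) - bet (2*i+3) := by
        have e1 := hSsucc (2*i+2)
        have e2 : S (2*j+3) ≤ S (2*i+2) := hSmono (by omega)
        have e3 : bet (2*i+3) ≤ bet (2*i+2) := bet_anti _ _ (by omega)
        linarith
      linarith [hxi.1, hxj.2]
  -- the inner function
  set g : ℝ → ENNReal := fun x => ∫⁻ y in Eᶜ ∩ Ω, Kker1 s x y ∂gauss1 with hgdef
  -- per-j lower bound
  have hmain : ∀ j, ENNReal.ofReal (d^2/64 * bet (2*j+3) ^ (1-s))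
      ≤ ∫⁻ x in A j, g x ∂gauss1 := by
    intro j
    set b' : ℝ := bet (2*j+3) with hb'def
    have hb'0 : 0 < b' := bet_pos _
    have hb'4 : b' ≤ 1/4 := bet_le _
    have hS4 : S (2*j+4) = S (2*j+3) + b' := hSsucc (2*j+3)
    have hA0 : 0 ≤ S (2*j+3) - b' := by
      have e1 := hSsucc (2*j+2)
      have e3 : b' ≤ bet (2*j+2) := bet_anti _ _ (by omega)
      have := hS0 (2*j+2)
      linarith
    -- kernel bound on A j × B j
    have hker : ∀ x ∈ A j, ∀ y ∈ B j,
        ENNReal.ofReal ((2*b') ^ (-1-s) / 16) ≤ Kker1 s x y := by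
      intro x hx y hy
      apply Kker1_lb hs0 hs1
      · linarith [hx.1]
      · linarith [hy.1, hS0 (2*j+3)]
      · have h1 := hx.1; have h2 := hx.2
        have h3 := hy.1; have h4 := hy.2
        rw [hS4] at h4
        nlinarith
      · linarith
      · linarith
    -- inner integral bound
    have hinner : ∀ x ∈ A j,
        ENNReal.ofReal ((2*b') ^ (-1-s) / 16) * gauss1 (B j) ≤ g x := by
      intro x hx
      calc ENNReal.ofReal ((2*b') ^ (-1-s) / 16) * gauss1 (B j)
          = ∫⁻ _ in B j, ENNReal.ofReal ((2*b') ^ (-1-s) / 16) ∂gauss1 := by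
            rw [setLIntegral_const]
        _ ≤ ∫⁻ y in B j, Kker1 s x y ∂gauss1 :=
            setLIntegral_mono' measurableSet_Ioo (hker x hx)
        _ ≤ g x := lintegral_mono' (Measure.restrict_mono (hBsub j) le_rfl) le_rfl
    have houter : ENNReal.ofReal ((2*b') ^ (-1-s) / 16) * gauss1 (B j) * gauss1 (A j)
        ≤ ∫⁻ x in A j, g x ∂gauss1 := by
      calc ENNReal.ofReal ((2*b') ^ (-1-s) / 16) * gauss1 (B j) * gauss1 (A j)
          = ∫⁻ _ in A j, ENNReal.ofReal ((2*b') ^ (-1-s) / 16) * gauss1 (B j) ∂gauss1 := by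
            rw [setLIntegral_const]
        _ ≤ _ := setLIntegral_mono' measurableSet_Ioo hinner
    refine le_trans ?_ houter
    -- gaussian measures of A j, B j
    have hgA : ENNReal.ofReal d * ENNReal.ofReal b' ≤ gauss1 (A j) := by
      have := gauss1_Ioo_ge (a := S (2*j+3) - b') (b := S (2*j+3)) (Mv := M)
        hA0 (hSlt _).le
      simpa [hddef, show S (2*j+3) - (S (2*j+3) - b') = b' by ring] using this
    have hgB : ENNReal.ofReal d * ENNReal.ofReal b' ≤ gauss1 (B j) := by
      have := gauss1_Ioo_ge (a := S (2*j+3)) (b := S (2*j+4)) (Mv := M)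
        (hS0 _) (hSlt _).le
      simpa [hddef, show S (2*j+4) - S (2*j+3) = b' by linarith [hS4]] using this
    calc ENNReal.ofReal (d^2/64 * b' ^ (1-s))
        ≤ ENNReal.ofReal ((2*b') ^ (-1-s) / 16 * (d * b') * (d * b')) := by
          apply ENNReal.ofReal_le_ofReal
          have a2 : ((2:ℝ)*b') ^ (-1-s) = 2^(-1-s) * b'^(-1-s) :=
            Real.mul_rpow (by norm_num) hb'0.le
          have hT : (1/4:ℝ) ≤ (2:ℝ)^(-1-s) := by
            have h1 : ((2:ℝ))^(-2:ℝ) ≤ (2:ℝ)^(-1-s) :=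
              Real.rpow_le_rpow_of_exponent_le one_le_two (by linarith)
            have h2 : ((2:ℝ))^(-2:ℝ) = 1/4 := by
              rw [show (-2:ℝ) = ((-2:ℤ):ℝ) by norm_num, Real.rpow_intCast]; norm_num
            exact le_trans (le_of_eq h2.symm) h1
          have hcomb : b'^(-1-s) * b' * b' = b'^(1-s) := by
            rw [show b'^(1-s) = b'^((-1-s)+2) by congr 1; ring, Real.rpow_add hb'0,
              show ((2:ℝ)) = ((2:ℕ):ℝ) by norm_num, Real.rpow_natCast]
            ring
          have hPpos : (0:ℝ) < b'^(-1-s) := Real.rpow_pos_of_pos hb'0 _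
          have hQpos : (0:ℝ) < b'^(1-s) := Real.rpow_pos_of_pos hb'0 _
          rw [a2]
          calc d^2/64 * b'^(1-s) = (1/4) * (b'^(-1-s) * b' * b') * d^2 / 16 := by
                rw [hcomb]; ring
            _ ≤ (2:ℝ)^(-1-s) * (b'^(-1-s) * b' * b') * d^2 / 16 := by
                have : (0:ℝ) ≤ (b'^(-1-s) * b' * b') * d^2 / 16 := by positivity
                nlinarith [hT, hPpos, hb'0, hd0, sq_nonneg d]
            _ = 2^(-1-s) * b'^(-1-s) / 16 * (d * b') * (d * b') := by ring
      _ = ENNReal.ofReal ((2*b') ^ (-1-s) / 16) * ENNReal.ofReal (d * b')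
            * ENNReal.ofReal (d * b') := by
          rw [← ENNReal.ofReal_mul (by positivity), ← ENNReal.ofReal_mul (by positivity)]
      _ ≤ ENNReal.ofReal ((2*b') ^ (-1-s) / 16) * gauss1 (B j) * gauss1 (A j) := by
          have h1 : ENNReal.ofReal (d * b') ≤ gauss1 (B j) := by
            rw [ENNReal.ofReal_mul hd0.le]; exact hgB
          have h2 : ENNReal.ofReal (d * b') ≤ gauss1 (A j) := by
            rw [ENNReal.ofReal_mul hd0.le]; exact hgA
          exact mul_le_mul' (mul_le_mul' le_rfl h1) h2
  -- the series diverges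
  have htop : (∑' j : ℕ, ENNReal.ofReal (d^2/64 * bet (2*j+3) ^ (1-s))) = ⊤ := by
    by_contra hne
    have hsm := ENNReal.summable_toReal hne
    have hsm2 : Summable (fun j : ℕ => d^2/64 * bet (2*j+3) ^ (1-s)) := by
      refine hsm.congr fun j => ENNReal.toReal_ofReal ?_
      have := Real.rpow_nonneg (bet_pos (2*j+3)).le (1-s)
      positivity
    have hsm3 : Summable (fun j : ℕ => (256/d^2) * (d^2/64 * bet (2*j+3) ^ (1-s))) :=
      hsm2.mul_left _
    refine not_summable_of_harmonic_le ?_ hsm3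
    have hj : Tendsto (fun j : ℕ => 2*j+3) atTop atTop := by
      apply tendsto_atTop_atTop_of_monotone (fun a b h => by omega)
      intro b; exact ⟨b, by omega⟩
    filter_upwards [hj.eventually (bet_harmonic hs0 hs1)] with j hjj
    have hcast : ((2*j+3:ℕ):ℝ) = 2*(j:ℝ)+3 := by push_cast; ring
    rw [hcast] at hjj
    have hd2 : (256:ℝ)/d^2 * (d^2/64 * bet (2*j+3) ^ (1-s)) = 4 * bet (2*j+3) ^ (1-s) := by
      field_simp; ring
    rw [hd2]
    have hjr : (0:ℝ) ≤ (j:ℝ) := Nat.cast_nonneg j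
    calc (1:ℝ)/((j:ℝ)+1) ≤ 4 * (1/(2*(j:ℝ)+3+1)) := by
          rw [mul_one_div, div_le_div_iff₀ (by positivity) (by positivity)]
          nlinarith
      _ ≤ 4 * bet (2*j+3) ^ (1-s) := by
          apply mul_le_mul_of_nonneg_left hjj (by norm_num)
  -- conclude
  have hL1 : Lgamma1 s (E ∩ Ω) (Eᶜ ∩ Ω) = ⊤ := by
    rw [eq_top_iff, ← htop]
    calc ∑' j : ℕ, ENNReal.ofReal (d^2/64 * bet (2*j+3) ^ (1-s))
        ≤ ∑' j : ℕ, ∫⁻ x in A j, g x ∂gauss1 := ENNReal.tsum_le_tsum hmain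
      _ = ∫⁻ x in ⋃ j, A j, g x ∂gauss1 :=
          (lintegral_iUnion (fun j => measurableSet_Ioo) hdisjA g).symm
      _ ≤ ∫⁻ x in E ∩ Ω, g x ∂gauss1 :=
          lintegral_mono' (Measure.restrict_mono (iUnion_subset hAsub) le_rfl) le_rfl
      _ = Lgamma1 s (E ∩ Ω) (Eᶜ ∩ Ω) := rfl
  rw [Pgamma1, hL1]
  simp
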